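/- Assume 0 < p_s, p_s^e < 1 and 0 < p_α ≤ 1. Then for every k ∈ ℕ, the marginals of ρ are geometric: ∑_{i∈ℕ} ρ(i,k) = P_B (1 − P_B)^k and ∑_{j∈ℕ} ρ(k,j) = P_A (1 − P_A)^k, both sums being convergent. -/

import Mathlib

noncomputable section

/-- λ11 = p_α p_s p_s^e -/
def l11 (ps pse pa : ℝ) : ℝ := pa * ps * pse
/-- λ10 = p_α p_s (1 − p_s^e) -/
def l10 (ps pse pa : ℝ) : ℝ := pa * ps * (1 - pse)
/-- λ01 = p_α (1 − p_s) p_s^e -/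
def l01 (ps pse pa : ℝ) : ℝ := pa * (1 - ps) * pse
/-- λ00 = p_α (1 − p_s)(1 − p_s^e) + (1 − p_α) -/
def l00 (ps pse pa : ℝ) : ℝ := pa * (1 - ps) * (1 - pse) + (1 - pa)
/-- P_A = λ11 + λ10 -/
def PA (ps pse pa : ℝ) : ℝ := l11 ps pse pa + l10 ps pse pa
/-- P_B = λ11 + λ01 -/
def PB (ps pse pa : ℝ) : ℝ := l11 ps pse pa + l01 ps pse pa

/-- Stationary distribution ρ of the joint age process on ℕ×ℕ. -/
def rho (ps pse pa : ℝ) : ℕ × ℕ → ℝ := fun ij =>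
  if ij.1 = ij.2 then l11 ps pse pa * l00 ps pse pa ^ ij.1
  else if ij.1 < ij.2 then
    l10 ps pse pa * PB ps pse pa * (1 - PB ps pse pa) ^ (ij.2 - ij.1 - 1) *
      l00 ps pse pa ^ ij.1
  else
    l01 ps pse pa * PA ps pse pa * (1 - PA ps pse pa) ^ (ij.1 - ij.2 - 1) *
      l00 ps pse pa ^ ij.2

set_option maxHeartbeats 1000000 in
lemma rho_swap (ps pse pa : ℝ) (i j : ℕ) :
    rho ps pse pa (i, j) = rho pse ps pa (j, i) := by
  rcases lt_trichotomy i j with h | h | h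
  · simp [rho, h, h.ne, h.ne', not_lt.mpr h.le, l10, l01, PA, PB, l11, l00]
    ring
  · simp [rho, h, l11, l00]
    ring
  · simp [rho, h, h.ne, h.ne', not_lt.mpr h.le, l10, l01, PA, PB, l11, l00]
    ring

set_option maxHeartbeats 1000000 in
lemma marg (ps pse pa : ℝ)
    (hs0 : 0 < ps) (hs1 : ps < 1) (he0 : 0 < pse) (he1 : pse < 1)
    (ha0 : 0 < pa) (ha1 : pa ≤ 1) (k : ℕ) :
    HasSum (fun i => rho ps pse pa (i, k)) (PB ps pse pa * (1 - PB ps pse pa) ^ k) := by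
  have hPA0 : 0 < PA ps pse pa := by unfold PA l11 l10; nlinarith
  have hPA1 : PA ps pse pa < 1 := by unfold PA l11 l10; nlinarith
  induction k with
  | zero =>
    have hg : HasSum (fun n : ℕ => (1 - PA ps pse pa) ^ n) (PA ps pse pa)⁻¹ := by
      have := hasSum_geometric_of_lt_one (by linarith : (0:ℝ) ≤ 1 - PA ps pse pa)
        (by linarith)
      simpa using this
    have htail : HasSum (fun n : ℕ => rho ps pse pa (n + 1, 0)) (l01 ps pse pa) := by
      have h2 := hg.mul_left (l01 ps pse pa * PA ps pse pa)
      have heq : (fun n : ℕ => rho ps pse pa (n + 1, 0))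
          = fun n : ℕ => l01 ps pse pa * PA ps pse pa * (1 - PA ps pse pa) ^ n := by
        funext n
        simp [rho]
      rw [heq]
      convert h2 using 1
      · rfl
      field_simp
    have := (hasSum_nat_add_iff (f := fun n => rho ps pse pa (n, 0)) 1).mp htail
    convert this using 1
    · rfl
    simp [rho, PB]
    ring
  | succ k ih =>
    have htail : HasSum (fun n : ℕ => rho ps pse pa (n + 1, k + 1))
        (l00 ps pse pa * (PB ps pse pa * (1 - PB ps pse pa) ^ k)) := by
      have heq : (fun n : ℕ => rho ps pse pa (n + 1, k + 1))
          = fun n : ℕ => l00 ps pse pa * rho ps pse pa (n, k) := by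
        funext n
        rcases lt_trichotomy n k with h | h | h
        · have e1 : k + 1 - (n + 1) - 1 = k - n - 1 := by omega
          simp [rho, h, Nat.succ_lt_succ h, h.ne, Nat.succ_ne_succ.mpr h.ne, e1]
          ring
        · simp [rho, h]
          ring
        · have e1 : n + 1 - (k + 1) - 1 = n - k - 1 := by omega
          simp [rho, h.ne', Nat.succ_ne_succ.mpr h.ne', not_lt.mpr h.le,
            not_lt.mpr (Nat.succ_le_succ h.le), e1]
          ring
      rw [heq]
      exact ih.mul_left _
    have h2 := (hasSum_nat_add_iff (f := fun n => rho ps pse pa (n, k+1)) 1).mp htail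
    convert h2 using 1
    · rfl
    have hk : l00 ps pse pa + l10 ps pse pa = 1 - PB ps pse pa := by
      unfold l00 l10 PB l11 l01; ring
    simp [rho]
    rw [← hk]
    ring

/-- The marginals of ρ are geometric with parameters P_B and P_A. -/
theorem stmt12 (ps pse pa : ℝ)
    (hs0 : 0 < ps) (hs1 : ps < 1) (he0 : 0 < pse) (he1 : pse < 1)
    (ha0 : 0 < pa) (ha1 : pa ≤ 1) :
    ∀ k : ℕ,
      HasSum (fun i => rho ps pse pa (i, k)) (PB ps pse pa * (1 - PB ps pse pa) ^ k) ∧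
      HasSum (fun j => rho ps pse pa (k, j)) (PA ps pse pa * (1 - PA ps pse pa) ^ k) := by
  intro k
  constructor
  · exact marg ps pse pa hs0 hs1 he0 he1 ha0 ha1 k
  · have h := marg pse ps pa he0 he1 hs0 hs1 ha0 ha1 k
    have hPA : PB pse ps pa = PA ps pse pa := by unfold PA PB l11 l10 l01; ring
    have heq : (fun j => rho ps pse pa (k, j)) = fun j => rho pse ps pa (j, k) := by
      funext j; exact rho_swap ps pse pa k j
    rw [heq, ← hPA]
    exact h
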